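/- For all n ≥ 1 and m ≥ 1, the set ⟦⟨q0, s_{n,m}⟩⟧_OI of outputs of the mtt M_sat in OI-mode on input s_{n,m} equals the set { enc(φ) | φ is a satisfiable 3-CNF formula over the variables p_0,…,p_{n−1} with exactly m clauses }. -/

import Mathlib

namespace MttF

/-- Finite ordered trees over a label type `α`. -/
inductive RTree (α : Type) : Type
  | node : α → List (RTree α) → RTree α

namespace RTree

variable {α β : Type}

/-- The root label of a tree. -/
def label : RTree α → α
  | node a _ => a

/-- The list of immediate subtrees of a tree. -/
def children : RTree α → List (RTree α)
  | node _ ts => ts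

/-- Relabelling of trees. -/
def map (f : α → β) : RTree α → RTree β
  | node a ts => node (f a) (ts.attach.map (fun x => map f x.1))
decreasing_by
  have := List.sizeOf_lt_of_mem x.2
  simp only [node.sizeOf_spec]
  omega

/-- A tree is well-formed with respect to a rank function if every node labeled
by a rank-`k` symbol has exactly `k` children. `T_Σ` is the set of well-formed
trees over `Σ`. -/
inductive Wf (rk : α → ℕ) : RTree α → Prop
  | node {a : α} {ts : List (RTree α)} :
      ts.length = rk a → (∀ t ∈ ts, Wf rk t) → Wf rk (node a ts)

/-- `Subtree u t` holds iff `u` is a subtree of `t` (rooted at some node of `t`). -/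
inductive Subtree : RTree α → RTree α → Prop
  | refl (t : RTree α) : Subtree t t
  | step {u c : RTree α} {a : α} {ts : List (RTree α)} :
      c ∈ ts → Subtree u c → Subtree u (node a ts)

end RTree

/-- Labels for output trees with parameters: trees over `Δ ∪ Y`. -/
inductive OLab (Δ : Type) : Type
  | out (d : Δ)
  | param (i : ℕ)

/-- Labels for right-hand sides of mtt rules: trees over `Δ ∪ (Q × X) ∪ Y`
(the second component of a call is the index of the input variable `x`). -/
inductive RLab (Δ Q : Type) : Type
  | out (d : Δ)
  | call (q : Q) (x : ℕ)
  | param (i : ℕ)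

/-- Labels for "semantic" trees over `Δ ∪ (Q × T_Σ) ∪ Y`. -/
inductive SLab (Γ Δ Q : Type) : Type
  | out (d : Δ)
  | call (q : Q) (s : RTree Γ)
  | param (i : ℕ)

/-- Trees over `Δ ∪ Y`. -/
abbrev OT (Δ : Type) := RTree (OLab Δ)
/-- Right-hand side trees over `Δ ∪ (Q × X) ∪ Y`. -/
abbrev Rhs (Δ Q : Type) := RTree (RLab Δ Q)
/-- Trees over `Δ ∪ (Q × T_Σ) ∪ Y`. -/
abbrev ST (Γ Δ Q : Type) := RTree (SLab Γ Δ Q)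

/-- First-order substitution `x_i := ss_i` on a label of a right-hand side
(indices are 0-based; for well-formed rules the index is always in range). -/
def RLab.subst {Γ Δ Q : Type} (ss : List (RTree Γ)) : RLab Δ Q → SLab Γ Δ Q
  | .out d => .out d
  | .param i => .param i
  | .call q x =>
    match ss[x]? with
    | some s => .call q s
    | none => .param x

/-- `r[x_1/s_1, …, x_k/s_k]`. -/
def substX {Γ Δ Q : Type} (ss : List (RTree Γ)) (r : Rhs Δ Q) : ST Γ Δ Q :=
  r.map (RLab.subst ss)

/-- Second-order (parameter) substitution `t[y_1/ts_1, …, y_n/ts_n]`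
(`y` indices are 0-based). -/
def substY {Δ : Type} (ts : List (OT Δ)) : OT Δ → OT Δ
  | .node (.param i) _ => ts.getD i (.node (.param i) [])
  | .node (.out d) us => .node (.out d) (us.attach.map (fun x => substY ts x.1))
decreasing_by
  have := List.sizeOf_lt_of_mem x.2
  simp only [RTree.node.sizeOf_spec]
  omega

/-- The embedding of `T_Δ` into the trees over `Δ ∪ Y`. -/
def embed {Δ : Type} (t : RTree Δ) : OT Δ := t.map OLab.out

variable {Γ Δ Q : Type}

/-- IO (call-by-value, inside-out) semantics: `SemIO rsel u t` holds iff
`t ∈ ⟦u⟧_IO`.  The rules of the transducer are given by a selector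
`rsel q σ ss`: the set of right-hand sides of the `⟨q,σ⟩`-rules that are
applicable when the children of the current input node are `ss` (for a plain
mtt this does not depend on `ss`, cf. `plainSel`). -/
inductive SemIO (rsel : Q → Γ → List (RTree Γ) → Set (Rhs Δ Q)) :
    ST Γ Δ Q → OT Δ → Prop
  | param (i : ℕ) :
      SemIO rsel (.node (.param i) []) (.node (.param i) [])
  | out {d : Δ} {us : List (ST Γ Δ Q)} {ts : List (OT Δ)}
      (hlen : ts.length = us.length)
      (h : ∀ i : Fin us.length, SemIO rsel (us.get i) (ts.get (i.cast hlen.symm))) :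
      SemIO rsel (.node (.out d) us) (.node (.out d) ts)
  | call {q : Q} {σ : Γ} {ss : List (RTree Γ)} {us : List (ST Γ Δ Q)}
      {r : Rhs Δ Q} {t₀ : OT Δ} {ts : List (OT Δ)}
      (hr : r ∈ rsel q σ ss)
      (h₀ : SemIO rsel (substX ss r) t₀)
      (hlen : ts.length = us.length)
      (h : ∀ i : Fin us.length, SemIO rsel (us.get i) (ts.get (i.cast hlen.symm))) :
      SemIO rsel (.node (.call q (.node σ ss)) us) (substY ts t₀)

mutual
/-- OI (call-by-name, outside-in) semantics: `SemOI rsel u t` holds iff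
`t ∈ ⟦u⟧_OI`. -/
inductive SemOI (rsel : Q → Γ → List (RTree Γ) → Set (Rhs Δ Q)) :
    ST Γ Δ Q → OT Δ → Prop
  | param (i : ℕ) :
      SemOI rsel (.node (.param i) []) (.node (.param i) [])
  | out {d : Δ} {us : List (ST Γ Δ Q)} {ts : List (OT Δ)}
      (hlen : ts.length = us.length)
      (h : ∀ i : Fin us.length, SemOI rsel (us.get i) (ts.get (i.cast hlen.symm))) :
      SemOI rsel (.node (.out d) us) (.node (.out d) ts)
  | call {q : Q} {σ : Γ} {ss : List (RTree Γ)} {us : List (ST Γ Δ Q)}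
      {r : Rhs Δ Q} {t₀ : OT Δ} {t : OT Δ}
      (hr : r ∈ rsel q σ ss)
      (h₀ : SemOI rsel (substX ss r) t₀)
      (hs : OISub rsel us t₀ t) :
      SemOI rsel (.node (.call q (.node σ ss)) us) t

/-- OI-substitution: `OISub rsel us t₀ t` holds iff `t ∈ (t₀ ←_OI (⟦us_1⟧_OI, …, ⟦us_n⟧_OI))`,
i.e. `t` is obtained from `t₀` by independently replacing every occurrence of a parameter
`y_i` by some member of `⟦us_i⟧_OI`. -/
inductive OISub (rsel : Q → Γ → List (RTree Γ) → Set (Rhs Δ Q)) :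
    List (ST Γ Δ Q) → OT Δ → OT Δ → Prop
  | param {us : List (ST Γ Δ Q)} {i : ℕ} {t : OT Δ}
      (h : i < us.length) (hsem : SemOI rsel (us.get ⟨i, h⟩) t) :
      OISub rsel us (.node (.param i) []) t
  | out {us : List (ST Γ Δ Q)} {d : Δ} {ts ts' : List (OT Δ)}
      (hlen : ts'.length = ts.length)
      (h : ∀ i : Fin ts.length, OISub rsel us (ts.get i) (ts'.get (i.cast hlen.symm))) :
      OISub rsel us (.node (.out d) ts) (.node (.out d) ts')
end

/-- The rule selector of a plain mtt: the applicable rules do not depend on the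
child subtrees of the current input node. -/
def plainSel (rules : Q → Γ → Set (Rhs Δ Q)) :
    Q → Γ → List (RTree Γ) → Set (Rhs Δ Q) :=
  fun q σ _ => rules q σ

/-- The translation `τ_{IO,M} ⊆ T_Σ × T_Δ` realized in IO mode. -/
def tauIO (rankΓ : Γ → ℕ) (rankΔ : Δ → ℕ)
    (rsel : Q → Γ → List (RTree Γ) → Set (Rhs Δ Q)) (q₀ : Q) :
    Set (RTree Γ × RTree Δ) :=
  {p | p.1.Wf rankΓ ∧ p.2.Wf rankΔ ∧
       SemIO rsel (.node (.call q₀ p.1) []) (embed p.2)}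

/-- The translation `τ_{OI,M} ⊆ T_Σ × T_Δ` realized in OI mode. -/
def tauOI (rankΓ : Γ → ℕ) (rankΔ : Δ → ℕ)
    (rsel : Q → Γ → List (RTree Γ) → Set (Rhs Δ Q)) (q₀ : Q) :
    Set (RTree Γ × RTree Δ) :=
  {p | p.1.Wf rankΓ ∧ p.2.Wf rankΔ ∧
       SemOI rsel (.node (.call q₀ p.1) []) (embed p.2)}

/-- Well-formedness of a right-hand side of a rule of an mtt whose current
input symbol has rank `k` and whose current state has rank `m`: output symbols
have the correct number of children, state calls `⟨q', x_i⟩` have `rank q'`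
children and `i < k`, and parameters `y_j` satisfy `j < m`. -/
inductive RhsWf (rankΔ : Δ → ℕ) (rankQ : Q → ℕ) (k m : ℕ) : Rhs Δ Q → Prop
  | out {d : Δ} {ts : List (Rhs Δ Q)}
      (hlen : ts.length = rankΔ d) (h : ∀ t ∈ ts, RhsWf rankΔ rankQ k m t) :
      RhsWf rankΔ rankQ k m (.node (.out d) ts)
  | call {q : Q} {x : ℕ} {ts : List (Rhs Δ Q)}
      (hx : x < k) (hlen : ts.length = rankQ q)
      (h : ∀ t ∈ ts, RhsWf rankΔ rankQ k m t) :
      RhsWf rankΔ rankQ k m (.node (.call q x) ts)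
  | param {i : ℕ} (hi : i < m) : RhsWf rankΔ rankQ k m (.node (.param i) [])

/-- Well-formedness of a tree over `Δ ∪ (Q × T_Σ) ∪ Y`. -/
inductive STWf (rankΓ : Γ → ℕ) (rankΔ : Δ → ℕ) (rankQ : Q → ℕ) : ST Γ Δ Q → Prop
  | out {d : Δ} {ts : List (ST Γ Δ Q)}
      (hlen : ts.length = rankΔ d) (h : ∀ t ∈ ts, STWf rankΓ rankΔ rankQ t) :
      STWf rankΓ rankΔ rankQ (.node (.out d) ts)
  | call {q : Q} {s : RTree Γ} {ts : List (ST Γ Δ Q)}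
      (hs : s.Wf rankΓ) (hlen : ts.length = rankQ q)
      (h : ∀ t ∈ ts, STWf rankΓ rankΔ rankQ t) :
      STWf rankΓ rankΔ rankQ (.node (.call q s) ts)
  | param (i : ℕ) : STWf rankΓ rankΔ rankQ (.node (.param i) [])

/-- A tree over `Δ ∪ (Q × T_Σ) ∪ Y` is parameter-free if no `y_i` occurs in it. -/
inductive NoParam : ST Γ Δ Q → Prop
  | node {l : SLab Γ Δ Q} {ts : List (ST Γ Δ Q)}
      (hl : ∀ i : ℕ, l ≠ .param i) (h : ∀ t ∈ ts, NoParam t) :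
      NoParam (.node l ts)

/-- A macro tree transducer `M = (Q, Σ, Δ, q₀, R)`.  The alphabets `Γ` (input),
`Δ` (output) and the set `Q` of states are ranked; `q₀` has rank `0`; `rules q σ`
is the (finite) set `R_{q,σ}` of right-hand sides of the `⟨q,σ⟩`-rules, and every
right-hand side is a well-formed tree over `Δ ∪ (Q × X_k) ∪ Y_m`. -/
structure MTT (Γ Δ Q : Type) where
  rankΓ : Γ → ℕ
  rankΔ : Δ → ℕ
  rankQ : Q → ℕ
  q₀ : Q
  q₀_rank : rankQ q₀ = 0
  rules : Q → Γ → Set (Rhs Δ Q)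
  rules_fin : ∀ q σ, (rules q σ).Finite
  rules_wf : ∀ q σ, ∀ r ∈ rules q σ, RhsWf rankΔ rankQ (rankΓ σ) (rankQ q) r

/-- The rule selector of a plain mtt. -/
def MTT.sel (M : MTT Γ Δ Q) : Q → Γ → List (RTree Γ) → Set (Rhs Δ Q) :=
  plainSel M.rules

end MttF
namespace MttF

/-- Input alphabet of `M_sat`: `a` (rank 1), `b` (rank 3), `c` (rank 1), `d` (rank 0). -/
inductive GS : Type | a | b | c | d

def rkGS : GS → ℕ | .a => 1 | .b => 3 | .c => 1 | .d => 0

/-- Output alphabet of `M_sat`: `∧` (rank 2), `∨` (rank 3), `¬` (rank 1),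
`v` (rank 1), `e` (rank 0). -/
inductive DS : Type | and | or | not | v | e

def rkDS : DS → ℕ | .and => 2 | .or => 3 | .not => 1 | .v => 1 | .e => 0

/-- States of `M_sat`: `q0` (rank 0), `q` (rank 3, parameters `y_v, y_t, y_f`),
`qc` (rank 2). -/
inductive QS : Type | q0 | q | qc

def rkQS : QS → ℕ | .q0 => 0 | .q => 3 | .qc => 2

/-- The parameter `y_i` (`y 0 = y_v`, `y 1 = y_t`, `y 2 = y_f`). -/
def yS (i : ℕ) : Rhs DS QS := .node (.param i) []

def oeS : Rhs DS QS := .node (.out .e) []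

/-- Either `y_t` (for `true`) or `y_f` (for `false`). -/
def ytf : Bool → Rhs DS QS
  | true => yS 1
  | false => yS 2

/-- The two `⟨q0,a⟩`-rules: `⟨q0, a(x₁)⟩ → ⟨q, x₁⟩(v(e), e, ¬(e))` and
`⟨q0, a(x₁)⟩ → ⟨q, x₁⟩(v(e), ¬(e), e)`. -/
def q0Rule : Bool → Rhs DS QS
  | true => .node (.call .q 0) [.node (.out .v) [oeS], oeS, .node (.out .not) [oeS]]
  | false => .node (.call .q 0) [.node (.out .v) [oeS], .node (.out .not) [oeS], oeS]

/-- The two `⟨q,b⟩`-rules: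
`⟨q, b(x₁,x₂,x₃)⟩(y_v,y_t,y_f) → ⟨q, x₁⟩(v(y_v), ⟨qc,x₂⟩(y_t, y_v), ⟨qc,x₃⟩(y_f, ¬(y_v)))`
and
`⟨q, b(x₁,x₂,x₃)⟩(y_v,y_t,y_f) → ⟨q, x₁⟩(v(y_v), ⟨qc,x₂⟩(y_t, ¬(y_v)), ⟨qc,x₃⟩(y_f, y_v))`. -/
def qbRule : Bool → Rhs DS QS
  | true => .node (.call .q 0) [.node (.out .v) [yS 0],
      .node (.call .qc 1) [yS 1, yS 0],
      .node (.call .qc 2) [yS 2, .node (.out .not) [yS 0]]]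
  | false => .node (.call .q 0) [.node (.out .v) [yS 0],
      .node (.call .qc 1) [yS 1, .node (.out .not) [yS 0]],
      .node (.call .qc 2) [yS 2, yS 0]]

/-- The `⟨q,c⟩`-rule for a literal choice `(z₁,z₂,z₃) ∈ {y_t,y_f}³`:
`⟨q, c(x₁)⟩(y_v,y_t,y_f) → ∧(∨(z₁,z₂,z₃), ⟨q, x₁⟩(y_v,y_t,y_f))`. -/
def qcRule (b1 b2 b3 : Bool) : Rhs DS QS :=
  .node (.out .and) [.node (.out .or) [ytf b1, ytf b2, ytf b3],
    .node (.call .q 0) [yS 0, yS 1, yS 2]]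

/-- The `⟨q,d⟩`-rule for a literal choice: `⟨q, d⟩(y_v,y_t,y_f) → ∨(z₁,z₂,z₃)`. -/
def qdRule (b1 b2 b3 : Bool) : Rhs DS QS :=
  .node (.out .or) [ytf b1, ytf b2, ytf b3]

/-- The rules of `M_sat`; the `⟨q,c⟩`- and `⟨q,d⟩`-rules range over the seven
triples in `{y_t,y_f}³` other than `(y_f,y_f,y_f)`, and the `⟨qc,d⟩`-rules are
`⟨qc, d⟩(y₁,y₂) → y₁` and `⟨qc, d⟩(y₁,y₂) → y₂`. -/
def rulesSat : QS → GS → Set (Rhs DS QS)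
  | .q0, .a => {r | ∃ pos : Bool, r = q0Rule pos}
  | .q, .b => {r | ∃ pos : Bool, r = qbRule pos}
  | .qc, .d => {.node (.param 0) [], .node (.param 1) []}
  | .q, .c => {r | ∃ b1 b2 b3 : Bool, (b1 || b2 || b3) = true ∧ r = qcRule b1 b2 b3}
  | .q, .d => {r | ∃ b1 b2 b3 : Bool, (b1 || b2 || b3) = true ∧ r = qdRule b1 b2 b3}
  | _, _ => ∅

/-- A literal: `(true, i)` is `p_i` and `(false, i)` is `¬ p_i`. -/
abbrev Lit := Bool × ℕ
/-- A clause: a disjunction of exactly three literals. -/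
abbrev Clause := Lit × Lit × Lit
/-- A 3-CNF formula: a (nonempty) list of clauses `C_1 ∧ ⋯ ∧ C_m`. -/
abbrev CNF := List Clause

/-- `φ` is a 3-CNF formula over the variables `p_0, …, p_{n−1}` with exactly
`m` clauses. -/
def goodCNF (n m : ℕ) (φ : CNF) : Prop :=
  φ.length = m ∧ ∀ cl ∈ φ, cl.1.2 < n ∧ cl.2.1.2 < n ∧ cl.2.2.2 < n

/-- A literal is true under an assignment `α`. -/
def evalLit (α : ℕ → Bool) (l : Lit) : Prop := α l.2 = l.1

/-- Satisfiability of a 3-CNF formula. -/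
def Satisfiable (φ : CNF) : Prop :=
  ∃ α : ℕ → Bool, ∀ cl ∈ φ, evalLit α cl.1 ∨ evalLit α cl.2.1 ∨ evalLit α cl.2.2

/-- The encoding `v^i(e)` of the variable `p_i`. -/
def varE : ℕ → RTree DS
  | 0 => .node .e []
  | i+1 => .node .v [varE i]

/-- The encoding of a literal. -/
def litE : Lit → RTree DS
  | (true, i) => varE i
  | (false, i) => .node .not [varE i]

/-- The encoding `∨(enc l₁, enc l₂, enc l₃)` of a clause. -/
def clauseE : Clause → RTree DS
  | (l1, l2, l3) => .node .or [litE l1, litE l2, litE l3]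

/-- The (right-nested) encoding of a 3-CNF formula. -/
def encF : CNF → RTree DS
  | [] => .node .e []
  | [cl] => clauseE cl
  | cl :: cls => .node .and [clauseE cl, encF cls]

/-- `c^k(d)`. -/
def cIter : ℕ → RTree GS
  | 0 => .node .d []
  | k+1 => .node .c [cIter k]

/-- `t_{i+1} = b(t_i, d, d)`. -/
def bIter : ℕ → RTree GS → RTree GS
  | 0, t => t
  | k+1, t => .node .b [bIter k t, .node .d [], .node .d []]

/-- The input tree `s_{n,m} = a(t_{n−1})` with `t_0 = c^{m−1}(d)` and
`t_{i+1} = b(t_i, d, d)`. -/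
def sNM (n m : ℕ) : RTree GS := .node .a [bIter (n-1) (cIter (m-1))]

section Aux
namespace RTree
variable {α β : Type}
theorem ind' {P : RTree α → Prop}
    (h : ∀ (a : α) (ts : List (RTree α)), (∀ t ∈ ts, P t) → P (.node a ts)) :
    ∀ t, P t := by
  have key : ∀ n (t : RTree α), sizeOf t ≤ n → P t := by
    intro n
    induction n with
    | zero => intro t ht; cases t with | node a ts => simp at ht
    | succ n ih =>
      intro t ht
      cases t with
      | node a ts =>
        refine h a ts (fun u hu => ih u ?_)
        have := List.sizeOf_lt_of_mem hu
        simp only [RTree.node.sizeOf_spec] at ht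
        omega
  exact fun t => key (sizeOf t) t le_rfl

@[simp] theorem map_node (f : α → β) (a : α) (ts : List (RTree α)) :
    (RTree.node a ts).map f = .node (f a) (ts.map (RTree.map f)) := by
  rw [RTree.map]
  simp
end RTree
end Aux
section Aux2
variable {Γ Δ Q : Type} {rsel : Q → Γ → List (RTree Γ) → Set (Rhs Δ Q)}

/-- Forall₂ version of the out constructor's hypothesis. -/
theorem semOI_out_iff {d : Δ} {us : List (ST Γ Δ Q)} {t : OT Δ} :
    SemOI rsel (.node (.out d) us) t ↔
      ∃ ts, List.Forall₂ (SemOI rsel) us ts ∧ t = .node (.out d) ts := by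
  constructor
  · intro h
    cases h with
    | out hlen h =>
      refine ⟨_, ?_, rfl⟩
      rw [List.forall₂_iff_get]
      exact ⟨hlen.symm, fun i h₁ h₂ => h ⟨i, h₁⟩⟩
  · rintro ⟨ts, hf, rfl⟩
    rw [List.forall₂_iff_get] at hf
    exact SemOI.out hf.1.symm (fun i => hf.2 i i.2 (hf.1 ▸ i.2))

theorem semOI_param_iff {i : ℕ} {t : OT Δ} :
    SemOI rsel (.node (.param i) ([] : List (ST Γ Δ Q))) t ↔ t = .node (.param i) [] := by
  constructor
  · intro h; cases h; rfl
  · rintro rfl; exact SemOI.param i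

theorem semOI_call_iff {q : Q} {σ : Γ} {ss : List (RTree Γ)} {us : List (ST Γ Δ Q)} {t : OT Δ} :
    SemOI rsel (.node (.call q (.node σ ss)) us) t ↔
      ∃ r ∈ rsel q σ ss, ∃ t₀, SemOI rsel (substX ss r) t₀ ∧ OISub rsel us t₀ t := by
  constructor
  · intro h; cases h with
    | call hr h₀ hs => exact ⟨_, hr, _, h₀, hs⟩
  · rintro ⟨r, hr, t₀, h₀, hs⟩; exact SemOI.call hr h₀ hs

/-- The OI semantics of a tree, as a set. -/
def sem (rsel : Q → Γ → List (RTree Γ) → Set (Rhs Δ Q)) (u : ST Γ Δ Q) : Set (OT Δ) :=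
  {t | SemOI rsel u t}

/-- OI substitution with sets of trees. -/
inductive SubS (Ls : List (Set (OT Δ))) : OT Δ → OT Δ → Prop
  | param {i : ℕ} {t : OT Δ} (h : i < Ls.length) (ht : t ∈ Ls.get ⟨i, h⟩) :
      SubS Ls (.node (.param i) []) t
  | out {d : Δ} {ts ts' : List (OT Δ)} (h : List.Forall₂ (SubS Ls) ts ts') :
      SubS Ls (.node (.out d) ts) (.node (.out d) ts')

theorem subS_out_iff {Ls : List (Set (OT Δ))} {d : Δ} {ts : List (OT Δ)} {t : OT Δ} :
    SubS Ls (.node (.out d) ts) t ↔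
      ∃ ts', List.Forall₂ (SubS Ls) ts ts' ∧ t = .node (.out d) ts' := by
  constructor
  · intro h; cases h with | out h => exact ⟨_, h, rfl⟩
  · rintro ⟨ts', h, rfl⟩; exact SubS.out h

theorem subS_param_iff {Ls : List (Set (OT Δ))} {i : ℕ} {t : OT Δ} :
    SubS Ls (.node (.param i) []) t ↔ ∃ h : i < Ls.length, t ∈ Ls.get ⟨i, h⟩ := by
  constructor
  · intro h; cases h with | param h ht => exact ⟨h, ht⟩
  · rintro ⟨h, ht⟩; exact SubS.param h ht

theorem oisub_iff_subS {us : List (ST Γ Δ Q)} {t₀ t : OT Δ} :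
    OISub rsel us t₀ t ↔ SubS (us.map (sem rsel)) t₀ t := by
  induction t₀ using RTree.ind' generalizing t with
  | h a ts ih =>
    constructor
    · intro h
      cases h with
      | param h hsem =>
        refine SubS.param (i := _) (by simpa using h) ?_
        simpa [sem, List.getElem_map] using hsem
      | out hlen h =>
        refine SubS.out ?_
        rw [List.forall₂_iff_get]
        refine ⟨hlen.symm, fun i h₁ h₂ => ?_⟩
        exact ih _ (List.get_mem _ _) |>.mp (h ⟨i, h₁⟩)
    · intro h
      cases h with
      | @param i t' h ht =>
        have h' : i < us.length := by simpa using h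
        refine OISub.param h' ?_
        have : (us.map (sem rsel)).get ⟨i, h⟩ = sem rsel (us.get ⟨i, h'⟩) := by
          simp
        rw [this] at ht
        exact ht
      | out hf =>
        rw [List.forall₂_iff_get] at hf
        refine OISub.out hf.1.symm (fun i => ?_)
        exact ih _ (List.get_mem _ _) |>.mpr (hf.2 i i.2 (hf.1 ▸ i.2))
end Aux2
section Aux3
variable {Γ Δ Q : Type} {rsel : Q → Γ → List (RTree Γ) → Set (Rhs Δ Q)}

theorem forall₂_map_left_eq {α' β' γ : Type} {R : α' → β' → Prop} {f : γ → α'} {g : γ → β'}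
    {ts : List γ} :
    ∀ {ts' : List β'}, List.Forall₂ R (ts.map f) ts' →
      (∀ x ∈ ts, ∀ y, R (f x) y → y = g x) → ts' = ts.map g := by
  induction ts with
  | nil => intro ts' h _; cases h; rfl
  | cons x xs ih =>
    intro ts' h hpt
    cases h with
    | cons h1 h2 =>
      rw [List.map_cons]
      rw [hpt x (by simp) _ h1, ih h2 (fun x hx => hpt x (by simp [hx]))]

theorem forall₂_map_of_pointwise {α' β' γ : Type} {R : α' → β' → Prop} {f : γ → α'} {g : γ → β'}
    {ts : List γ} (h : ∀ x ∈ ts, R (f x) (g x)) :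
    List.Forall₂ R (ts.map f) (ts.map g) := by
  induction ts with
  | nil => exact List.Forall₂.nil
  | cons x xs ih =>
    exact List.Forall₂.cons (h x (by simp)) (ih (fun x hx => h x (by simp [hx])))

@[simp] theorem embed_node (a : Δ) (ts : List (RTree Δ)) :
    embed (.node a ts) = .node (.out a) (ts.map embed) := by
  simp [embed]

theorem list_embed_inj : ∀ {ts us : List (RTree Δ)},
    (∀ x ∈ ts, ∀ u, embed x = embed u → x = u) →
    ts.map embed = us.map embed → ts = us := by
  intro ts
  induction ts with
  | nil => intro us _ h; cases us <;> simp_all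
  | cons x xs ih =>
    intro us hpt h
    cases us with
    | nil => simp at h
    | cons y ys =>
      simp only [List.map_cons, List.cons.injEq] at h
      rw [hpt x (by simp) y h.1, ih (fun x hx => hpt x (by simp [hx])) h.2]

theorem embed_injective : ∀ {t u : RTree Δ}, embed t = embed u → t = u := by
  intro t
  induction t using RTree.ind' with
  | h a ts ih =>
    intro u h
    cases u with
    | node b us =>
      simp only [embed_node, RTree.node.injEq, OLab.out.injEq] at h
      rw [h.1, list_embed_inj ih h.2]

/-- Semantics of an embedded ground output tree. -/
theorem sem_ground : ∀ (w : RTree Δ) (t : OT Δ),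
    SemOI rsel (w.map SLab.out : ST Γ Δ Q) t ↔ t = embed w := by
  intro w
  induction w using RTree.ind' with
  | h a ts ih =>
    intro t
    rw [RTree.map_node, semOI_out_iff]
    constructor
    · rintro ⟨ts', hf, rfl⟩
      have := forall₂_map_left_eq hf (fun x hx y hy => (ih x hx y).mp hy)
      rw [this, embed_node]
    · rintro rfl
      rw [embed_node]
      exact ⟨_, forall₂_map_of_pointwise (fun x hx => (ih x hx _).mpr rfl), rfl⟩

theorem forall₂_self_eq {α' : Type} {R : α' → α' → Prop} :
    ∀ {ts ts' : List α'}, List.Forall₂ R ts ts' →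
      (∀ x ∈ ts, ∀ y, R x y → y = x) → ts' = ts := by
  intro ts
  induction ts with
  | nil => intro ts' h _; cases h; rfl
  | cons x xs ih =>
    intro ts' h hpt
    cases h with
    | cons h1 h2 =>
      rw [hpt x (by simp) _ h1, ih h2 (fun x hx => hpt x (by simp [hx]))]

theorem subS_nil_eq : ∀ {w t : OT Δ}, SubS [] w t → t = w := by
  intro w
  induction w using RTree.ind' with
  | h a ts ih =>
    intro t h
    cases h with
    | param h ht => simp at h
    | out hf =>
      rw [forall₂_self_eq hf (fun x hx y hy => ih x hx hy)]

theorem subS_nil_self : ∀ (w : RTree Δ), SubS ([] : List (Set (OT Δ))) (embed w) (embed w) := by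
  intro w
  induction w using RTree.ind' with
  | h a ts ih =>
    rw [embed_node]
    exact SubS.out (forall₂_map_of_pointwise ih)

end Aux3
section Msat

/-- The rule selector of `M_sat`. -/
abbrev psel := plainSel rulesSat

/-- Parameter trees. -/
def pST (i : ℕ) : ST GS DS QS := .node (.param i) []
def pOT (i : ℕ) : OT DS := .node (.param i) []

@[simp] theorem sem_pST (i : ℕ) : sem psel (pST i) = {pOT i} := by
  ext t; simp only [sem, pST, pOT, semOI_param_iff, Set.mem_setOf_eq, Set.mem_singleton_iff]

def vImg (A : Set (OT DS)) : Set (OT DS) := {t | ∃ a ∈ A, t = .node (.out .v) [a]}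
def nImg (A : Set (OT DS)) : Set (OT DS) := {t | ∃ a ∈ A, t = .node (.out .not) [a]}

def SubImg (Ls : List (Set (OT DS))) (A : Set (OT DS)) : Set (OT DS) :=
  {t | ∃ w ∈ A, SubS Ls w t}

def Clause3 (T F : Set (OT DS)) : Set (OT DS) :=
  {w | ∃ b1 b2 b3 : Bool, ∃ t1 t2 t3 : OT DS, (b1 || b2 || b3) = true ∧
    t1 ∈ (bif b1 then T else F) ∧ t2 ∈ (bif b2 then T else F) ∧ t3 ∈ (bif b3 then T else F) ∧
    w = .node (.out .or) [t1, t2, t3]}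

def chainA : List (OT DS) → OT DS
  | [] => .node (.out .e) []
  | [w] => w
  | w :: ws => .node (.out .and) [w, chainA ws]

def ChainSet (n : ℕ) (T F : Set (OT DS)) : Set (OT DS) :=
  {t | ∃ ws : List (OT DS), ws.length = n ∧ (∀ w ∈ ws, w ∈ Clause3 T F) ∧ t = chainA ws}

def evolve : List Bool → Set (OT DS) × Set (OT DS) × Set (OT DS) →
    Set (OT DS) × Set (OT DS) × Set (OT DS)
  | [], s => s
  | pos :: ps, (V, T, F) =>
      evolve ps (vImg V, T ∪ (bif pos then V else nImg V), F ∪ (bif pos then nImg V else V))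

theorem subS_single_out {Ls : List (Set (OT DS))} {d : DS} {a t : OT DS} :
    SubS Ls (.node (.out d) [a]) t ↔ ∃ a', SubS Ls a a' ∧ t = .node (.out d) [a'] := by
  rw [subS_out_iff]
  constructor
  · rintro ⟨ts', hf, rfl⟩
    cases hf with
    | cons h1 h2 => cases h2; exact ⟨_, h1, rfl⟩
  · rintro ⟨a', h, rfl⟩
    exact ⟨[a'], List.Forall₂.cons h List.Forall₂.nil, rfl⟩

@[simp] theorem SubImg_union (Ls : List (Set (OT DS))) (A B : Set (OT DS)) :
    SubImg Ls (A ∪ B) = SubImg Ls A ∪ SubImg Ls B := by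
  ext t
  constructor
  · rintro ⟨w, hw | hw, hs⟩
    · exact Or.inl ⟨w, hw, hs⟩
    · exact Or.inr ⟨w, hw, hs⟩
  · rintro (⟨w, hw, hs⟩ | ⟨w, hw, hs⟩)
    · exact ⟨w, Or.inl hw, hs⟩
    · exact ⟨w, Or.inr hw, hs⟩

theorem SubImg_vImg (Ls : List (Set (OT DS))) (A : Set (OT DS)) :
    SubImg Ls (vImg A) = vImg (SubImg Ls A) := by
  ext t
  constructor
  · rintro ⟨w, ⟨a, ha, rfl⟩, hs⟩
    rw [subS_single_out] at hs
    obtain ⟨a', h, rfl⟩ := hs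
    exact ⟨a', ⟨a, ha, h⟩, rfl⟩
  · rintro ⟨a', ⟨a, ha, h⟩, rfl⟩
    exact ⟨.node (.out .v) [a], ⟨a, ha, rfl⟩, subS_single_out.mpr ⟨a', h, rfl⟩⟩

theorem SubImg_nImg (Ls : List (Set (OT DS))) (A : Set (OT DS)) :
    SubImg Ls (nImg A) = nImg (SubImg Ls A) := by
  ext t
  constructor
  · rintro ⟨w, ⟨a, ha, rfl⟩, hs⟩
    rw [subS_single_out] at hs
    obtain ⟨a', h, rfl⟩ := hs
    exact ⟨a', ⟨a, ha, h⟩, rfl⟩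
  · rintro ⟨a', ⟨a, ha, h⟩, rfl⟩
    exact ⟨.node (.out .not) [a], ⟨a, ha, rfl⟩, subS_single_out.mpr ⟨a', h, rfl⟩⟩

theorem SubImg_pOT (Ls : List (Set (OT DS))) (i : ℕ) (h : i < Ls.length) :
    SubImg Ls {pOT i} = Ls.get ⟨i, h⟩ := by
  ext t
  constructor
  · rintro ⟨w, rfl, hs⟩
    rw [pOT, subS_param_iff] at hs
    exact hs.2
  · intro ht
    exact ⟨pOT i, rfl, SubS.param h ht⟩

theorem SubImg_evolve (Ls : List (Set (OT DS))) :
    ∀ (ps : List Bool) (V T F : Set (OT DS)),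
      evolve ps (SubImg Ls V, SubImg Ls T, SubImg Ls F) =
        (SubImg Ls (evolve ps (V, T, F)).1,
         SubImg Ls (evolve ps (V, T, F)).2.1,
         SubImg Ls (evolve ps (V, T, F)).2.2) := by
  intro ps
  induction ps with
  | nil => intro V T F; rfl
  | cons pos ps ih =>
    intro V T F
    show evolve ps _ = _
    rw [show (evolve (pos :: ps) (V, T, F)) = evolve ps
      (vImg V, T ∪ (bif pos then V else nImg V), F ∪ (bif pos then nImg V else V)) from rfl]
    rw [← ih, SubImg_vImg]
    cases pos <;> simp [SubImg_nImg, SubImg_union]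

end Msat
section Msat2

theorem subS_triple_out {Ls : List (Set (OT DS))} {d : DS} {a b c t : OT DS} :
    SubS Ls (.node (.out d) [a, b, c]) t ↔
      ∃ a' b' c', SubS Ls a a' ∧ SubS Ls b b' ∧ SubS Ls c c' ∧
        t = .node (.out d) [a', b', c'] := by
  rw [subS_out_iff]
  constructor
  · rintro ⟨ts', hf, rfl⟩
    cases hf with | cons h1 hf =>
    cases hf with | cons h2 hf =>
    cases hf with | cons h3 hf =>
    cases hf
    exact ⟨_, _, _, h1, h2, h3, rfl⟩
  · rintro ⟨a', b', c', h1, h2, h3, rfl⟩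
    exact ⟨[a', b', c'], .cons h1 (.cons h2 (.cons h3 .nil)), rfl⟩

theorem SubImg_Clause3 (Ls : List (Set (OT DS))) (T F : Set (OT DS)) :
    SubImg Ls (Clause3 T F) = Clause3 (SubImg Ls T) (SubImg Ls F) := by
  ext t
  constructor
  · rintro ⟨w, ⟨b1, b2, b3, t1, t2, t3, hb, h1, h2, h3, rfl⟩, hs⟩
    rw [subS_triple_out] at hs
    obtain ⟨a', b', c', s1, s2, s3, rfl⟩ := hs
    refine ⟨b1, b2, b3, a', b', c', hb, ?_, ?_, ?_, rfl⟩
    · cases b1 <;> exact ⟨t1, h1, s1⟩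
    · cases b2 <;> exact ⟨t2, h2, s2⟩
    · cases b3 <;> exact ⟨t3, h3, s3⟩
  · rintro ⟨b1, b2, b3, t1, t2, t3, hb, h1, h2, h3, rfl⟩
    have g1 : ∃ w1, w1 ∈ (bif b1 then T else F) ∧ SubS Ls w1 t1 := by
      cases b1 <;> exact h1
    have g2 : ∃ w2, w2 ∈ (bif b2 then T else F) ∧ SubS Ls w2 t2 := by
      cases b2 <;> exact h2
    have g3 : ∃ w3, w3 ∈ (bif b3 then T else F) ∧ SubS Ls w3 t3 := by
      cases b3 <;> exact h3
    obtain ⟨w1, hw1, s1⟩ := g1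
    obtain ⟨w2, hw2, s2⟩ := g2
    obtain ⟨w3, hw3, s3⟩ := g3
    exact ⟨.node (.out .or) [w1, w2, w3], ⟨b1, b2, b3, w1, w2, w3, hb, hw1, hw2, hw3, rfl⟩,
      subS_triple_out.mpr ⟨t1, t2, t3, s1, s2, s3, rfl⟩⟩

theorem subS_chainA {Ls : List (Set (OT DS))} :
    ∀ (ws : List (OT DS)) (t : OT DS),
      SubS Ls (chainA ws) t ↔
        ∃ ws', List.Forall₂ (SubS Ls) ws ws' ∧ t = chainA ws' := by
  intro ws
  induction ws with
  | nil =>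
    intro t
    rw [show chainA [] = .node (.out .e) [] from rfl, subS_out_iff]
    constructor
    · rintro ⟨ts', hf, rfl⟩; cases hf; exact ⟨[], .nil, rfl⟩
    · rintro ⟨ws', hf, rfl⟩; cases hf; exact ⟨[], .nil, rfl⟩
  | cons w ws ih =>
    intro t
    cases ws with
    | nil =>
      rw [show chainA [w] = w from rfl]
      constructor
      · intro h; exact ⟨[t], .cons h .nil, rfl⟩
      · rintro ⟨ws', hf, rfl⟩
        cases hf with | cons h1 hf => cases hf; exact h1
    | cons w' ws'' =>
      rw [show chainA (w :: w' :: ws'') = .node (.out .and) [w, chainA (w' :: ws'')] from rfl]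
      constructor
      · intro h
        cases h with
        | out hf =>
          cases hf with | cons h1 hf =>
          cases hf with | cons h2 hf =>
          cases hf
          obtain ⟨ws', hf', rfl⟩ := (ih _).mp h2
          cases hf' with | cons hh hf'' =>
            exact ⟨_ :: _ :: _, .cons h1 (.cons hh hf''), rfl⟩
      · rintro ⟨ws', hf, rfl⟩
        cases hf with | cons h1 hf =>
        cases hf with | cons h2 hf =>
        refine SubS.out (.cons h1 (.cons ?_ .nil))
        exact (ih _).mpr ⟨_, .cons h2 hf, rfl⟩

theorem SubImg_ChainSet (Ls : List (Set (OT DS))) (n : ℕ) (T F : Set (OT DS)) :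
    SubImg Ls (ChainSet n T F) = ChainSet n (SubImg Ls T) (SubImg Ls F) := by
  ext t
  constructor
  · rintro ⟨w, ⟨ws, hlen, hcl, rfl⟩, hs⟩
    obtain ⟨ws', hf, rfl⟩ := (subS_chainA ws _).mp hs
    refine ⟨ws', by rw [← hf.length_eq, hlen], ?_, rfl⟩
    intro w' hw'
    obtain ⟨i, hi'⟩ := List.mem_iff_get.mp hw'
    rw [List.forall₂_iff_get] at hf
    have h2 := hf.2 i (by omega) i.2
    rw [show (⟨(i : ℕ), i.2⟩ : Fin ws'.length) = i from rfl, hi'] at h2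
    rw [← SubImg_Clause3]
    exact ⟨_, hcl _ (List.get_mem _ _), h2⟩
  · rintro ⟨ws', hlen, hcl, rfl⟩
    have : ∀ ws' : List (OT DS), (∀ w ∈ ws', w ∈ Clause3 (SubImg Ls T) (SubImg Ls F)) →
        ∃ ws, List.Forall₂ (SubS Ls) ws ws' ∧ ∀ w ∈ ws, w ∈ Clause3 T F := by
      intro ws'
      induction ws' with
      | nil => exact fun _ => ⟨[], .nil, by simp⟩
      | cons w' ws'' ih =>
        intro h
        obtain ⟨ws, hf, hcl'⟩ := ih (fun w hw => h w (by simp [hw]))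
        have : w' ∈ SubImg Ls (Clause3 T F) := by
          rw [SubImg_Clause3]; exact h w' (by simp)
        obtain ⟨w, hw, hs⟩ := this
        refine ⟨w :: ws, .cons hs hf, ?_⟩
        intro x hx
        rcases List.mem_cons.mp hx with rfl | hx
        · exact hw
        · exact hcl' _ hx
    obtain ⟨ws, hf, hcl'⟩ := this ws' hcl
    exact ⟨chainA ws, ⟨ws, by rw [hf.length_eq, hlen], hcl', rfl⟩,
      (subS_chainA ws _).mpr ⟨ws', hf, rfl⟩⟩

end Msat2
section Msat3

@[simp] theorem substX_node {Γ Δ Q : Type} (ss : List (RTree Γ)) (l : RLab Δ Q)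
    (ts : List (Rhs Δ Q)) :
    substX ss (.node l ts) = .node (RLab.subst ss l) (ts.map (substX ss)) := by
  simp [substX]

theorem semOI_pair_out {Γ Δ Q : Type} {rsel : Q → Γ → List (RTree Γ) → Set (Rhs Δ Q)}
    {d : Δ} {a b : ST Γ Δ Q} {t : OT Δ} :
    SemOI rsel (.node (.out d) [a, b]) t ↔
      ∃ a' b', SemOI rsel a a' ∧ SemOI rsel b b' ∧ t = .node (.out d) [a', b'] := by
  rw [semOI_out_iff]
  constructor
  · rintro ⟨ts', hf, rfl⟩
    cases hf with | cons h1 hf =>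
    cases hf with | cons h2 hf =>
    cases hf
    exact ⟨_, _, h1, h2, rfl⟩
  · rintro ⟨a', b', h1, h2, rfl⟩
    exact ⟨[a', b'], .cons h1 (.cons h2 .nil), rfl⟩

theorem semOI_triple_out {Γ Δ Q : Type} {rsel : Q → Γ → List (RTree Γ) → Set (Rhs Δ Q)}
    {d : Δ} {a b c : ST Γ Δ Q} {t : OT Δ} :
    SemOI rsel (.node (.out d) [a, b, c]) t ↔
      ∃ a' b' c', SemOI rsel a a' ∧ SemOI rsel b b' ∧ SemOI rsel c c' ∧
        t = .node (.out d) [a', b', c'] := by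
  rw [semOI_out_iff]
  constructor
  · rintro ⟨ts', hf, rfl⟩
    cases hf with | cons h1 hf =>
    cases hf with | cons h2 hf =>
    cases hf with | cons h3 hf =>
    cases hf
    exact ⟨_, _, _, h1, h2, h3, rfl⟩
  · rintro ⟨a', b', c', h1, h2, h3, rfl⟩
    exact ⟨[a', b', c'], .cons h1 (.cons h2 (.cons h3 .nil)), rfl⟩

/-- index of the parameter used for the literal flag `b`. -/
def ix (b : Bool) : ℕ := bif b then 1 else 2

theorem ChainSet_one (T F : Set (OT DS)) : ChainSet 1 T F = Clause3 T F := by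
  ext t
  constructor
  · rintro ⟨ws, hlen, hcl, rfl⟩
    obtain ⟨w, rfl⟩ := List.length_eq_one_iff.mp hlen
    exact hcl w (by simp)
  · intro h
    exact ⟨[t], rfl, by simpa using h, rfl⟩

theorem chainA_cons {w : OT DS} {ws : List (OT DS)} (h : ws ≠ []) :
    chainA (w :: ws) = .node (.out .and) [w, chainA ws] := by
  cases ws with
  | nil => exact absurd rfl h
  | cons w' ws' => rfl

theorem ChainSet_succ (n : ℕ) (hn : 1 ≤ n) (T F : Set (OT DS)) :
    ChainSet (n+1) T F =
      {t | ∃ w t', w ∈ Clause3 T F ∧ t' ∈ ChainSet n T F ∧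
        t = .node (.out .and) [w, t']} := by
  ext t
  constructor
  · rintro ⟨ws, hlen, hcl, rfl⟩
    cases ws with
    | nil => simp at hlen
    | cons w ws' =>
      have hne : ws' ≠ [] := by
        intro h; rw [h] at hlen; simp at hlen; omega
      refine ⟨w, chainA ws', hcl w (by simp), ⟨ws', by simpa using hlen,
        fun x hx => hcl x (by simp [hx]), rfl⟩, ?_⟩
      exact chainA_cons hne
  · rintro ⟨w, t', hw, ⟨ws', hlen, hcl, rfl⟩, rfl⟩
    refine ⟨w :: ws', by simp [hlen], ?_, ?_⟩
    · intro x hx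
      rcases List.mem_cons.mp hx with rfl | hx
      · exact hw
      · exact hcl x hx
    · exact (chainA_cons (by intro h; rw [h] at hlen; simp at hlen; omega)).symm

theorem sem_qc (u1 u2 : ST GS DS QS) :
    sem psel (.node (.call .qc (.node .d [])) [u1, u2]) = sem psel u1 ∪ sem psel u2 := by
  ext t
  show SemOI psel _ t ↔ _
  rw [semOI_call_iff]
  constructor
  · rintro ⟨r, hr, t₀, h₀, hs⟩
    rw [oisub_iff_subS] at hs
    have hr' : r = .node (.param 0) [] ∨ r = .node (.param 1) [] := hr
    rcases hr' with rfl | rfl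
    · rw [show substX ([] : List (RTree GS)) (.node (.param 0) [] : Rhs DS QS) =
        .node (.param 0) [] from by simp [RLab.subst]] at h₀
      rw [semOI_param_iff] at h₀
      subst h₀
      rw [subS_param_iff] at hs
      obtain ⟨h, ht⟩ := hs
      exact Or.inl ht
    · rw [show substX ([] : List (RTree GS)) (.node (.param 1) [] : Rhs DS QS) =
        .node (.param 1) [] from by simp [RLab.subst]] at h₀
      rw [semOI_param_iff] at h₀
      subst h₀
      rw [subS_param_iff] at hs
      obtain ⟨h, ht⟩ := hs
      exact Or.inr ht
  · rintro (ht | ht)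
    · refine ⟨.node (.param 0) [], Or.inl rfl, .node (.param 0) [], ?_, ?_⟩
      · rw [show substX ([] : List (RTree GS)) (.node (.param 0) [] : Rhs DS QS) =
          .node (.param 0) [] from by simp [RLab.subst]]
        exact SemOI.param 0
      · rw [oisub_iff_subS]
        exact SubS.param (by simp) ht
    · refine ⟨.node (.param 1) [], Or.inr rfl, .node (.param 1) [], ?_, ?_⟩
      · rw [show substX ([] : List (RTree GS)) (.node (.param 1) [] : Rhs DS QS) =
          .node (.param 1) [] from by simp [RLab.subst]]
        exact SemOI.param 1
      · rw [oisub_iff_subS]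
        exact SubS.param (by simp) ht

end Msat3
section LemC

theorem pOT_ix_mem (b : Bool) :
    pOT (ix b) ∈ (bif b then ({pOT 1} : Set (OT DS)) else {pOT 2}) := by
  cases b <;> rfl

theorem subS_ix {L0 L1 L2 : Set (OT DS)} {b : Bool} {t : OT DS} :
    SubS [L0, L1, L2] (pOT (ix b)) t ↔ t ∈ (bif b then L1 else L2) := by
  cases b <;>
  · rw [pOT, subS_param_iff]
    constructor
    · rintro ⟨h, ht⟩; exact ht
    · intro ht; exact ⟨by simp [ix], ht⟩

theorem semC : ∀ (k : ℕ) (u0 u1 u2 : ST GS DS QS) (t : OT DS),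
    SemOI psel (.node (.call .q (cIter k)) [u0, u1, u2]) t ↔
      t ∈ ChainSet (k+1) (sem psel u1) (sem psel u2) := by
  intro k
  induction k with
  | zero =>
    intro u0 u1 u2 t
    rw [show cIter 0 = .node .d [] from rfl, semOI_call_iff, ChainSet_one]
    constructor
    · rintro ⟨r, ⟨b1, b2, b3, hb, rfl⟩, t₀, h₀, hs⟩
      rw [oisub_iff_subS] at hs
      rw [show substX ([] : List (RTree GS)) (qdRule b1 b2 b3) =
        .node (.out .or) [pST (ix b1), pST (ix b2), pST (ix b3)] from by
          cases b1 <;> cases b2 <;> cases b3 <;> simp [qdRule, ytf, yS, pST, ix, RLab.subst]]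
        at h₀
      rw [semOI_triple_out] at h₀
      obtain ⟨a', b', c', h1, h2, h3, rfl⟩ := h₀
      rw [pST, semOI_param_iff] at h1 h2 h3
      subst h1; subst h2; subst h3
      rw [subS_triple_out] at hs
      obtain ⟨t1, t2, t3, s1, s2, s3, rfl⟩ := hs
      exact ⟨b1, b2, b3, t1, t2, t3, hb, subS_ix.mp s1, subS_ix.mp s2, subS_ix.mp s3, rfl⟩
    · rintro ⟨b1, b2, b3, t1, t2, t3, hb, h1, h2, h3, rfl⟩
      refine ⟨qdRule b1 b2 b3, ⟨b1, b2, b3, hb, rfl⟩,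
        .node (.out .or) [pOT (ix b1), pOT (ix b2), pOT (ix b3)], ?_, ?_⟩
      · rw [show substX ([] : List (RTree GS)) (qdRule b1 b2 b3) =
          .node (.out .or) [pST (ix b1), pST (ix b2), pST (ix b3)] from by
            cases b1 <;> cases b2 <;> cases b3 <;> simp [qdRule, ytf, yS, pST, ix, RLab.subst]]
        exact semOI_triple_out.mpr ⟨_, _, _, semOI_param_iff.mpr rfl,
          semOI_param_iff.mpr rfl, semOI_param_iff.mpr rfl, rfl⟩
      · rw [oisub_iff_subS]
        exact subS_triple_out.mpr ⟨t1, t2, t3, subS_ix.mpr h1, subS_ix.mpr h2,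
          subS_ix.mpr h3, rfl⟩
  | succ k ih =>
    intro u0 u1 u2 t
    have hsub : ∀ t : OT DS, (∃ t₀ ∈ ChainSet (k+2) ({pOT 1} : Set (OT DS)) {pOT 2},
        SubS [sem psel u0, sem psel u1, sem psel u2] t₀ t) ↔
        t ∈ ChainSet (k+2) (sem psel u1) (sem psel u2) := by
      intro t
      have : SubImg [sem psel u0, sem psel u1, sem psel u2]
          (ChainSet (k+2) {pOT 1} {pOT 2}) = ChainSet (k+2) (sem psel u1) (sem psel u2) := by
        rw [SubImg_ChainSet,
          SubImg_pOT _ 1 (by simp), SubImg_pOT _ 2 (by simp)]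
        rfl
      rw [← this]
      exact Iff.rfl
    rw [show cIter (k+1) = .node .c [cIter k] from rfl, semOI_call_iff]
    constructor
    · rintro ⟨r, ⟨b1, b2, b3, hb, rfl⟩, t₀, h₀, hs⟩
      rw [oisub_iff_subS] at hs
      rw [show substX [cIter k] (qcRule b1 b2 b3) =
        .node (.out .and) [.node (.out .or) [pST (ix b1), pST (ix b2), pST (ix b3)],
          .node (.call .q (cIter k)) [pST 0, pST 1, pST 2]] from by
          cases b1 <;> cases b2 <;> cases b3 <;> simp [qcRule, ytf, yS, pST, ix, RLab.subst]]
        at h₀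
      rw [semOI_pair_out] at h₀
      obtain ⟨w₀, t₀', hw₀, ht₀', rfl⟩ := h₀
      rw [semOI_triple_out] at hw₀
      obtain ⟨a', b', c', h1, h2, h3, rfl⟩ := hw₀
      rw [pST, semOI_param_iff] at h1 h2 h3
      subst h1; subst h2; subst h3
      rw [ih, sem_pST, sem_pST] at ht₀'
      refine (hsub t).mp ⟨_, ?_, hs⟩
      rw [ChainSet_succ (k+1) (by omega)]
      exact ⟨_, _, ⟨b1, b2, b3, pOT (ix b1), pOT (ix b2), pOT (ix b3), hb,
        pOT_ix_mem b1, pOT_ix_mem b2, pOT_ix_mem b3, rfl⟩, ht₀', rfl⟩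
    · intro ht
      obtain ⟨t₀, ht₀, hs⟩ := (hsub t).mpr ht
      rw [ChainSet_succ (k+1) (by omega)] at ht₀
      obtain ⟨w₀, t₀', hw₀, ht₀', rfl⟩ := ht₀
      obtain ⟨b1, b2, b3, t1, t2, t3, hb, h1, h2, h3, rfl⟩ := hw₀
      have e1 : t1 = pOT (ix b1) := by cases b1 <;> simpa [ix] using h1
      have e2 : t2 = pOT (ix b2) := by cases b2 <;> simpa [ix] using h2
      have e3 : t3 = pOT (ix b3) := by cases b3 <;> simpa [ix] using h3
      subst e1; subst e2; subst e3
      refine ⟨qcRule b1 b2 b3, ⟨b1, b2, b3, hb, rfl⟩, _, ?_, oisub_iff_subS.mpr hs⟩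
      rw [show substX [cIter k] (qcRule b1 b2 b3) =
        .node (.out .and) [.node (.out .or) [pST (ix b1), pST (ix b2), pST (ix b3)],
          .node (.call .q (cIter k)) [pST 0, pST 1, pST 2]] from by
          cases b1 <;> cases b2 <;> cases b3 <;> simp [qcRule, ytf, yS, pST, ix, RLab.subst]]
      refine semOI_pair_out.mpr ⟨_, _, ?_, ?_, rfl⟩
      · exact semOI_triple_out.mpr ⟨_, _, _, semOI_param_iff.mpr rfl,
          semOI_param_iff.mpr rfl, semOI_param_iff.mpr rfl, rfl⟩
      · rw [ih, sem_pST, sem_pST]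
        exact ht₀'

end LemC
section LemB

theorem sem_single_out {d : DS} (u : ST GS DS QS) :
    sem psel (.node (.out d) [u]) = {t | ∃ a ∈ sem psel u, t = .node (.out d) [a]} := by
  ext t
  show SemOI psel _ t ↔ _
  rw [semOI_out_iff]
  constructor
  · rintro ⟨ts', hf, rfl⟩
    cases hf with | cons h1 hf =>
    cases hf
    exact ⟨_, h1, rfl⟩
  · rintro ⟨a, ha, rfl⟩
    exact ⟨[a], .cons ha .nil, rfl⟩

theorem semB : ∀ (j k : ℕ) (u0 u1 u2 : ST GS DS QS) (t : OT DS),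
    SemOI psel (.node (.call .q (bIter j (cIter k))) [u0, u1, u2]) t ↔
      ∃ ps : List Bool, ps.length = j ∧
        t ∈ ChainSet (k+1) (evolve ps (sem psel u0, sem psel u1, sem psel u2)).2.1
                           (evolve ps (sem psel u0, sem psel u1, sem psel u2)).2.2 := by
  intro j
  induction j with
  | zero =>
    intro k u0 u1 u2 t
    rw [show bIter 0 (cIter k) = cIter k from rfl, semC]
    constructor
    · intro h; exact ⟨[], rfl, h⟩
    · rintro ⟨ps, hlen, h⟩
      rw [List.length_eq_zero_iff.mp hlen] at h
      exact h
  | succ j ih =>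
    intro k u0 u1 u2 t
    rw [show bIter (j+1) (cIter k) = .node .b [bIter j (cIter k), .node .d [], .node .d []]
      from rfl, semOI_call_iff]
    set s' : RTree GS := bIter j (cIter k) with hs'
    have key : ∀ (pos : Bool) (ps' : List Bool) (t : OT DS),
        (∃ t₀, t₀ ∈ ChainSet (k+1)
            (evolve ps' (vImg {pOT 0},
              {pOT 1} ∪ (bif pos then {pOT 0} else nImg {pOT 0}),
              {pOT 2} ∪ (bif pos then nImg {pOT 0} else {pOT 0}))).2.1
            (evolve ps' (vImg {pOT 0},
              {pOT 1} ∪ (bif pos then {pOT 0} else nImg {pOT 0}),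
              {pOT 2} ∪ (bif pos then nImg {pOT 0} else {pOT 0}))).2.2 ∧
          SubS [sem psel u0, sem psel u1, sem psel u2] t₀ t) ↔
        t ∈ ChainSet (k+1)
            (evolve (pos :: ps') (sem psel u0, sem psel u1, sem psel u2)).2.1
            (evolve (pos :: ps') (sem psel u0, sem psel u1, sem psel u2)).2.2 := by
      intro pos ps' t
      have hL : ∀ A B : Set (OT DS),
          SubImg [sem psel u0, sem psel u1, sem psel u2] (ChainSet (k+1) A B) =
            ChainSet (k+1) (SubImg [sem psel u0, sem psel u1, sem psel u2] A)
              (SubImg [sem psel u0, sem psel u1, sem psel u2] B) :=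
        fun A B => SubImg_ChainSet _ _ A B
      have hev := SubImg_evolve [sem psel u0, sem psel u1, sem psel u2] ps'
        (vImg {pOT 0})
        ({pOT 1} ∪ (bif pos then {pOT 0} else nImg {pOT 0}))
        ({pOT 2} ∪ (bif pos then nImg {pOT 0} else {pOT 0}))
      have h21 := congrArg (fun p => p.2.1) hev
      have h22 := congrArg (fun p => p.2.2) hev
      simp only at h21 h22
      have e0 : SubImg [sem psel u0, sem psel u1, sem psel u2] (vImg {pOT 0}) =
          vImg (sem psel u0) := by
        rw [SubImg_vImg, SubImg_pOT _ 0 (by simp)]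
        rfl
      have e1 : SubImg [sem psel u0, sem psel u1, sem psel u2]
          ({pOT 1} ∪ (bif pos then {pOT 0} else nImg {pOT 0})) =
          sem psel u1 ∪ (bif pos then sem psel u0 else nImg (sem psel u0)) := by
        cases pos <;>
          simp only [SubImg_union, SubImg_vImg, SubImg_nImg, cond_true, cond_false] <;>
          rw [SubImg_pOT _ 1 (by simp), SubImg_pOT _ 0 (by simp)] <;> rfl
      have e2 : SubImg [sem psel u0, sem psel u1, sem psel u2]
          ({pOT 2} ∪ (bif pos then nImg {pOT 0} else {pOT 0})) =
          sem psel u2 ∪ (bif pos then nImg (sem psel u0) else sem psel u0) := by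
        cases pos <;>
          simp only [SubImg_union, SubImg_vImg, SubImg_nImg, cond_true, cond_false] <;>
          rw [SubImg_pOT _ 2 (by simp), SubImg_pOT _ 0 (by simp)] <;> rfl
      rw [e0, e1, e2] at h21 h22
      constructor
      · rintro ⟨t₀, ht₀, hs⟩
        show t ∈ ChainSet (k+1) (evolve ps' _).2.1 (evolve ps' _).2.2
        rw [h21, h22, ← hL]
        exact ⟨t₀, ht₀, hs⟩
      · intro ht
        have ht' : t ∈ ChainSet (k+1)
            (evolve ps' (vImg (sem psel u0),
              sem psel u1 ∪ (bif pos then sem psel u0 else nImg (sem psel u0)),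
              sem psel u2 ∪ (bif pos then nImg (sem psel u0) else sem psel u0))).2.1
            (evolve ps' (vImg (sem psel u0),
              sem psel u1 ∪ (bif pos then sem psel u0 else nImg (sem psel u0)),
              sem psel u2 ∪ (bif pos then nImg (sem psel u0) else sem psel u0))).2.2 := ht
        rw [h21, h22, ← hL] at ht'
        exact ht'
    constructor
    · rintro ⟨r, ⟨pos, rfl⟩, t₀, h₀, hs⟩
      rw [oisub_iff_subS] at hs
      rw [show substX [s', .node .d [], .node .d []] (qbRule pos) =
        .node (.call .q s') [.node (.out .v) [pST 0],
          .node (.call .qc (.node .d [])) [pST 1,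
            bif pos then pST 0 else .node (.out .not) [pST 0]],
          .node (.call .qc (.node .d [])) [pST 2,
            bif pos then .node (.out .not) [pST 0] else pST 0]] from by
          cases pos <;> simp [qbRule, yS, pST, RLab.subst]] at h₀
      rw [hs', ih] at h₀
      obtain ⟨ps', hlen, ht₀⟩ := h₀
      rw [sem_single_out, sem_pST, sem_qc, sem_qc, sem_pST, sem_pST] at ht₀
      have hX : sem psel (bif pos then pST 0 else .node (.out .not) [pST 0]) =
          (bif pos then {pOT 0} else nImg ({pOT 0} : Set (OT DS))) := by
        cases pos
        · rw [cond_false, cond_false, sem_single_out, sem_pST]; rfl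
        · rw [cond_true, cond_true, sem_pST]
      have hY : sem psel (bif pos then .node (.out .not) [pST 0] else pST 0) =
          (bif pos then nImg ({pOT 0} : Set (OT DS)) else {pOT 0}) := by
        cases pos
        · rw [cond_false, cond_false, sem_pST]
        · rw [cond_true, cond_true, sem_single_out, sem_pST]; rfl
      rw [hX, hY] at ht₀
      refine ⟨pos :: ps', by simp [hlen], ?_⟩
      exact (key pos ps' t).mp ⟨t₀, ht₀, hs⟩
    · rintro ⟨ps, hlen, ht⟩
      cases ps with
      | nil => simp at hlen
      | cons pos ps' =>
        obtain ⟨t₀, ht₀, hs⟩ := (key pos ps' t).mpr ht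
        refine ⟨qbRule pos, ⟨pos, rfl⟩, t₀, ?_, oisub_iff_subS.mpr hs⟩
        rw [show substX [s', .node .d [], .node .d []] (qbRule pos) =
          .node (.call .q s') [.node (.out .v) [pST 0],
            .node (.call .qc (.node .d [])) [pST 1,
              bif pos then pST 0 else .node (.out .not) [pST 0]],
            .node (.call .qc (.node .d [])) [pST 2,
              bif pos then .node (.out .not) [pST 0] else pST 0]] from by
            cases pos <;> simp [qbRule, yS, pST, RLab.subst]]
        rw [hs', ih]
        refine ⟨ps', by simpa using hlen, ?_⟩
        rw [sem_single_out, sem_pST, sem_qc, sem_qc, sem_pST, sem_pST]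
        have hX : sem psel (bif pos then pST 0 else .node (.out .not) [pST 0]) =
            (bif pos then {pOT 0} else nImg ({pOT 0} : Set (OT DS))) := by
          cases pos
          · rw [cond_false, cond_false, sem_single_out, sem_pST]; rfl
          · rw [cond_true, cond_true, sem_pST]
        have hY : sem psel (bif pos then .node (.out .not) [pST 0] else pST 0) =
            (bif pos then nImg ({pOT 0} : Set (OT DS)) else {pOT 0}) := by
          cases pos
          · rw [cond_false, cond_false, sem_pST]
          · rw [cond_true, cond_true, sem_single_out, sem_pST]; rfl
        rw [hX, hY]
        exact ht₀

end LemB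
section Final

theorem sem_ground_set (w : RTree DS) :
    sem psel (w.map SLab.out : ST GS DS QS) = {embed w} := by
  ext t; exact (sem_ground w t).trans (by rw [Set.mem_singleton_iff])

/-- literals true under `α` with index below `n`, encoded. -/
def TL (α : ℕ → Bool) (n : ℕ) : Set (OT DS) :=
  {t | ∃ l : Lit, l.2 < n ∧ α l.2 = l.1 ∧ t = embed (litE l)}

/-- literals false under `α` with index below `n`, encoded. -/
def FL (α : ℕ → Bool) (n : ℕ) : Set (OT DS) :=
  {t | ∃ l : Lit, l.2 < n ∧ α l.2 = (!l.1) ∧ t = embed (litE l)}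

theorem evolve_lits (α : ℕ → Bool) :
    ∀ (ps : List Bool) (i0 : ℕ) (T F : Set (OT DS)),
      (∀ (j : ℕ) (h : j < ps.length), ps.get ⟨j, h⟩ = α (i0 + j)) →
      (evolve ps ({embed (varE i0)}, T, F)).2.1 =
          T ∪ {t | ∃ l : Lit, i0 ≤ l.2 ∧ l.2 < i0 + ps.length ∧ α l.2 = l.1 ∧
            t = embed (litE l)} ∧
      (evolve ps ({embed (varE i0)}, T, F)).2.2 =
          F ∪ {t | ∃ l : Lit, i0 ≤ l.2 ∧ l.2 < i0 + ps.length ∧ α l.2 = (!l.1) ∧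
            t = embed (litE l)} := by
  intro ps
  induction ps with
  | nil =>
    intro i0 T F _
    constructor <;>
    · ext x
      constructor
      · exact fun h => Or.inl h
      · rintro (h | ⟨l, h1, h2, _⟩)
        · exact h
        · simp at h2; omega
  | cons pos ps ih =>
    intro i0 T F hps
    have hpos : pos = α i0 := by simpa using hps 0 (by simp)
    have hv : vImg {embed (varE i0)} = ({embed (varE (i0+1))} : Set (OT DS)) := by
      ext x
      constructor
      · rintro ⟨a, rfl, rfl⟩; rw [show varE (i0+1) = .node .v [varE i0] from rfl]; simp
      · rintro rfl
        exact ⟨embed (varE i0), rfl, by rw [show varE (i0+1) = .node .v [varE i0] from rfl]; simp⟩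
    have hTgain : (bif pos then ({embed (varE i0)} : Set (OT DS)) else nImg {embed (varE i0)}) =
        {embed (litE (α i0, i0))} := by
      rw [hpos]
      cases hai : α i0
      · rw [cond_false]
        ext x
        constructor
        · rintro ⟨a, rfl, rfl⟩; rw [show litE (false, i0) = .node .not [varE i0] from rfl]; simp
        · rintro rfl
          exact ⟨embed (varE i0), rfl, by
            rw [show litE (false, i0) = .node .not [varE i0] from rfl]; simp⟩
      · rw [cond_true]
        rw [show litE (true, i0) = varE i0 from rfl]
    have hFgain : (bif pos then nImg ({embed (varE i0)} : Set (OT DS)) else {embed (varE i0)}) =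
        {embed (litE (!(α i0), i0))} := by
      rw [hpos]
      cases hai : α i0
      · rw [cond_false, show litE (!false, i0) = varE i0 from rfl]
      · rw [cond_true]
        ext x
        constructor
        · rintro ⟨a, rfl, rfl⟩; rw [show litE (!true, i0) = .node .not [varE i0] from rfl]; simp
        · rintro rfl
          exact ⟨embed (varE i0), rfl, by
            rw [show litE (!true, i0) = .node .not [varE i0] from rfl]; simp⟩
    have hstep : evolve (pos :: ps) ({embed (varE i0)}, T, F) =
        evolve ps ({embed (varE (i0+1))}, T ∪ {embed (litE (α i0, i0))},
          F ∪ {embed (litE (!(α i0), i0))}) := by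
      rw [show evolve (pos :: ps) ({embed (varE i0)}, T, F) =
        evolve ps (vImg {embed (varE i0)},
          T ∪ (bif pos then {embed (varE i0)} else nImg {embed (varE i0)}),
          F ∪ (bif pos then nImg {embed (varE i0)} else {embed (varE i0)})) from rfl,
        hv, hTgain, hFgain]
    obtain ⟨e1, e2⟩ := ih (i0+1) (T ∪ {embed (litE (α i0, i0))})
      (F ∪ {embed (litE (!(α i0), i0))})
      (fun j h => by
        have := hps (j+1) (by simpa using h)
        rw [show (pos :: ps).get ⟨j+1, by simpa using h⟩ = ps.get ⟨j, h⟩ from rfl] at this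
        rw [this]; ring_nf)
    rw [hstep, e1, e2]
    constructor
    · ext x
      constructor
      · rintro ((hx | rfl) | ⟨l, h1, h2, h3, rfl⟩)
        · exact Or.inl hx
        · exact Or.inr ⟨(α i0, i0), by simp,
            by show i0 < i0 + (pos :: ps).length; simp only [List.length_cons]; omega, rfl, rfl⟩
        · exact Or.inr ⟨l, by omega, by simp at h2 ⊢; omega, h3, rfl⟩
      · rintro (hx | ⟨l, h1, h2, h3, rfl⟩)
        · exact Or.inl (Or.inl hx)
        · rcases Nat.eq_or_lt_of_le h1 with heq | hlt
          · have hl : l = (α i0, i0) := by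
              obtain ⟨b, i⟩ := l
              simp at heq h3 ⊢
              exact ⟨by rw [heq]; exact h3.symm, heq.symm⟩
            exact Or.inl (Or.inr (by rw [hl]; rfl))
          · exact Or.inr ⟨l, by omega, by simp at h2 ⊢; omega, h3, rfl⟩
    · ext x
      constructor
      · rintro ((hx | rfl) | ⟨l, h1, h2, h3, rfl⟩)
        · exact Or.inl hx
        · exact Or.inr ⟨(!(α i0), i0), by simp,
            by show i0 < i0 + (pos :: ps).length; simp only [List.length_cons]; omega, by simp, rfl⟩
        · exact Or.inr ⟨l, by omega, by simp at h2 ⊢; omega, h3, rfl⟩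
      · rintro (hx | ⟨l, h1, h2, h3, rfl⟩)
        · exact Or.inl (Or.inl hx)
        · rcases Nat.eq_or_lt_of_le h1 with heq | hlt
          · have hl : l = (!(α i0), i0) := by
              obtain ⟨b, i⟩ := l
              simp at heq h3 ⊢
              refine ⟨?_, heq.symm⟩
              rw [heq, h3]; simp
            exact Or.inl (Or.inr (by rw [hl]; rfl))
          · exact Or.inr ⟨l, by omega, by simp at h2 ⊢; omega, h3, rfl⟩

theorem Tfull (α : ℕ → Bool) (n : ℕ) (hn : 1 ≤ n) :
    ({embed (litE (α 0, 0))} : Set (OT DS)) ∪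
      {t | ∃ l : Lit, 1 ≤ l.2 ∧ l.2 < 1 + (n-1) ∧ α l.2 = l.1 ∧ t = embed (litE l)} =
    TL α n := by
  ext x
  constructor
  · rintro (rfl | ⟨l, h1, h2, h3, rfl⟩)
    · exact ⟨(α 0, 0), by show 0 < n; omega, rfl, rfl⟩
    · exact ⟨l, by omega, h3, rfl⟩
  · rintro ⟨l, h1, h3, rfl⟩
    rcases Nat.eq_zero_or_pos l.2 with h0 | h0
    · refine Or.inl ?_
      have hl : l = (α 0, 0) := by
        obtain ⟨b, i⟩ := l
        simp at h0 h3 ⊢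
        subst h0
        exact ⟨h3.symm, rfl⟩
      rw [hl]; rfl
    · exact Or.inr ⟨l, h0, by omega, h3, rfl⟩

theorem Ffull (α : ℕ → Bool) (n : ℕ) (hn : 1 ≤ n) :
    ({embed (litE (!(α 0), 0))} : Set (OT DS)) ∪
      {t | ∃ l : Lit, 1 ≤ l.2 ∧ l.2 < 1 + (n-1) ∧ α l.2 = (!l.1) ∧ t = embed (litE l)} =
    FL α n := by
  ext x
  constructor
  · rintro (rfl | ⟨l, h1, h2, h3, rfl⟩)
    · exact ⟨(!(α 0), 0), by show 0 < n; omega, by simp, rfl⟩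
    · exact ⟨l, by omega, h3, rfl⟩
  · rintro ⟨l, h1, h3, rfl⟩
    rcases Nat.eq_zero_or_pos l.2 with h0 | h0
    · refine Or.inl ?_
      have hl : l = (!(α 0), 0) := by
        obtain ⟨b, i⟩ := l
        simp at h0 h3 ⊢
        subst h0
        refine ⟨?_, rfl⟩
        rw [h3]; simp
      rw [hl]; rfl
    · exact Or.inr ⟨l, h0, by omega, h3, rfl⟩

end Final
section Final2

theorem clause_mem (α : ℕ → Bool) (n : ℕ) (w : OT DS) :
    w ∈ Clause3 (TL α n) (FL α n) ↔
      ∃ cl : Clause, (cl.1.2 < n ∧ cl.2.1.2 < n ∧ cl.2.2.2 < n) ∧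
        (evalLit α cl.1 ∨ evalLit α cl.2.1 ∨ evalLit α cl.2.2) ∧
        w = embed (clauseE cl) := by
  constructor
  · rintro ⟨b1, b2, b3, t1, t2, t3, hb, h1, h2, h3, rfl⟩
    have ext : ∀ (b : Bool) (x : OT DS), x ∈ (bif b then TL α n else FL α n) →
        ∃ l : Lit, l.2 < n ∧ (b = true → α l.2 = l.1) ∧ (b = false → α l.2 = !l.1) ∧
          x = embed (litE l) := by
      intro b x hx
      cases b
      · obtain ⟨l, hl1, hl2, rfl⟩ := hx
        exact ⟨l, hl1, by simp, fun _ => hl2, rfl⟩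
      · obtain ⟨l, hl1, hl2, rfl⟩ := hx
        exact ⟨l, hl1, fun _ => hl2, by simp, rfl⟩
    obtain ⟨l1, hb1, hT1, hF1, rfl⟩ := ext b1 t1 h1
    obtain ⟨l2, hb2, hT2, hF2, rfl⟩ := ext b2 t2 h2
    obtain ⟨l3, hb3, hT3, hF3, rfl⟩ := ext b3 t3 h3
    refine ⟨(l1, l2, l3), ⟨hb1, hb2, hb3⟩, ?_, by simp [clauseE]⟩
    have : b1 = true ∨ b2 = true ∨ b3 = true := by
      cases b1 <;> cases b2 <;> cases b3 <;> simp_all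
    rcases this with h | h | h
    · exact Or.inl (hT1 h)
    · exact Or.inr (Or.inl (hT2 h))
    · exact Or.inr (Or.inr (hT3 h))
  · rintro ⟨⟨l1, l2, l3⟩, ⟨hb1, hb2, hb3⟩, hsat, rfl⟩
    have hmem : ∀ l : Lit, l.2 < n →
        embed (litE l) ∈ (bif (α l.2 == l.1) then TL α n else FL α n) := by
      intro l hl
      cases hbeq : (α l.2 == l.1)
      · rw [cond_false]
        refine ⟨l, hl, ?_, rfl⟩
        cases h1 : α l.2 <;> cases h2 : l.1 <;> simp_all
      · rw [cond_true]
        exact ⟨l, hl, by simpa using hbeq, rfl⟩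
    refine ⟨α l1.2 == l1.1, α l2.2 == l2.1, α l3.2 == l3.1,
      embed (litE l1), embed (litE l2), embed (litE l3), ?_,
      hmem l1 hb1, hmem l2 hb2, hmem l3 hb3, by simp [clauseE]⟩
    rcases hsat with h | h | h
    · rw [show (α l1.2 == l1.1) = true from by simpa [evalLit] using h]; simp
    · rw [show (α l2.2 == l2.1) = true from by simpa [evalLit] using h]; simp
    · rw [show (α l3.2 == l3.1) = true from by simpa [evalLit] using h]; simp

theorem chainA_map_encF : ∀ (φ : CNF),
    chainA (φ.map (fun cl => embed (clauseE cl))) = embed (encF φ) := by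
  intro φ
  induction φ with
  | nil => simp [chainA, encF]
  | cons cl φ ih =>
    cases φ with
    | nil => simp [chainA, encF]
    | cons cl' φ' =>
      rw [List.map_cons,
        chainA_cons (by simp),
        show encF (cl :: cl' :: φ') = .node .and [clauseE cl, encF (cl' :: φ')] from rfl,
        embed_node, ih]
      simp

theorem list_choice {γ δ : Type} (P : γ → Prop) (f : γ → δ) :
    ∀ (ws : List δ), (∀ w ∈ ws, ∃ cl, P cl ∧ w = f cl) →
      ∃ φ : List γ, (∀ cl ∈ φ, P cl) ∧ ws = φ.map f := by
  intro ws
  induction ws with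
  | nil => exact fun _ => ⟨[], by simp, rfl⟩
  | cons w ws ih =>
    intro h
    obtain ⟨cl, hcl, rfl⟩ := h w (by simp)
    obtain ⟨φ, hφ, rfl⟩ := ih (fun w hw => h w (by simp [hw]))
    refine ⟨cl :: φ, ?_, rfl⟩
    intro c hc
    rcases List.mem_cons.mp hc with rfl | hc
    · exact hcl
    · exact hφ c hc

theorem subst_q0 (pos : Bool) (s : RTree GS) :
    substX [s] (q0Rule pos) =
      .node (.call .q s) [(varE 1).map SLab.out,
        (litE (pos, 0)).map SLab.out, (litE (!pos, 0)).map SLab.out] := by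
  cases pos <;> simp [q0Rule, oeS, RLab.subst, varE, litE]

end Final2
/-- For all `n ≥ 1` and `m ≥ 1`, the set `⟦⟨q0, s_{n,m}⟩⟧_OI` of
outputs of the mtt `M_sat` in OI-mode on input `s_{n,m}` equals the set
`{ enc(φ) | φ a satisfiable 3-CNF formula over `p_0,…,p_{n−1}` with exactly `m` clauses }`. -/
theorem oi_outputs_of_Msat (n m : ℕ) (hn : 1 ≤ n) (hm : 1 ≤ m) :
    {t : RTree DS | SemOI (plainSel rulesSat) (.node (.call .q0 (sNM n m)) []) (embed t)}
      = {t | ∃ φ : CNF, goodCNF n m φ ∧ Satisfiable φ ∧ t = encF φ} := by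
  have hm1 : m - 1 + 1 = m := by omega
  ext t
  simp only [Set.mem_setOf_eq]
  constructor
  · intro h
    rw [show sNM n m = .node .a [bIter (n-1) (cIter (m-1))] from rfl, semOI_call_iff] at h
    obtain ⟨r, ⟨pos, rfl⟩, t₀, h₀, hs⟩ := h
    rw [oisub_iff_subS] at hs
    have ht₀ : embed t = t₀ := subS_nil_eq hs
    subst ht₀
    rw [subst_q0, semB] at h₀
    obtain ⟨ps, hlen, ht⟩ := h₀
    rw [sem_ground_set, sem_ground_set, sem_ground_set] at ht
    set α : ℕ → Bool := fun i => if i = 0 then pos else ps.getD (i-1) true with hα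
    have hcond : ∀ (j : ℕ) (h : j < ps.length), ps.get ⟨j, h⟩ = α (1 + j) := by
      intro j hj
      rw [hα]
      simp only [Nat.add_sub_cancel_left, if_neg (by omega : ¬ 1 + j = 0)]
      rw [List.getD_eq_getElem ps true hj, List.get_eq_getElem]
    have hpos0 : pos = α 0 := by rw [hα]; simp
    obtain ⟨e1, e2⟩ := evolve_lits α ps 1 {embed (litE (α 0, 0))} {embed (litE (!(α 0), 0))} hcond
    rw [hpos0] at ht
    rw [e1, e2, hlen, Tfull α n hn, Ffull α n hn, hm1] at ht
    obtain ⟨ws, hws, hcl, hchain⟩ := ht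
    obtain ⟨φ, hφP, rfl⟩ := list_choice
      (fun cl : Clause => (cl.1.2 < n ∧ cl.2.1.2 < n ∧ cl.2.2.2 < n) ∧
        (evalLit α cl.1 ∨ evalLit α cl.2.1 ∨ evalLit α cl.2.2))
      (fun cl => embed (clauseE cl)) ws
      (fun w hw => by
        obtain ⟨cl, h1, h2, h3⟩ := (clause_mem α n w).mp (hcl w hw)
        exact ⟨cl, ⟨h1, h2⟩, h3⟩)
    refine ⟨φ, ⟨by simpa using hws, fun cl hcl' => (hφP cl hcl').1⟩,
      ⟨α, fun cl hcl' => (hφP cl hcl').2⟩, ?_⟩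
    apply embed_injective
    rw [hchain, chainA_map_encF]
  · rintro ⟨φ, ⟨hlenφ, hbound⟩, ⟨α, hsat⟩, rfl⟩
    rw [show sNM n m = .node .a [bIter (n-1) (cIter (m-1))] from rfl]
    refine semOI_call_iff.mpr ⟨q0Rule (α 0), ⟨α 0, rfl⟩, embed (encF φ), ?_, ?_⟩
    · rw [subst_q0, semB]
      refine ⟨List.ofFn (fun i : Fin (n-1) => α (1 + (i : ℕ))), by simp, ?_⟩
      rw [sem_ground_set, sem_ground_set, sem_ground_set]
      have hcond : ∀ (j : ℕ)
          (h : j < (List.ofFn (fun i : Fin (n-1) => α (1 + (i : ℕ)))).length),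
          (List.ofFn (fun i : Fin (n-1) => α (1 + (i : ℕ)))).get ⟨j, h⟩ = α (1 + j) := by
        intro j hj
        rw [List.get_ofFn]
        simp
      obtain ⟨e1, e2⟩ := evolve_lits α (List.ofFn (fun i : Fin (n-1) => α (1 + (i : ℕ))))
        1 {embed (litE (α 0, 0))} {embed (litE (!(α 0), 0))} hcond
      have hlps : (List.ofFn (fun i : Fin (n-1) => α (1 + (i : ℕ)))).length = n - 1 := by simp
      rw [e1, e2, hlps, Tfull α n hn, Ffull α n hn, hm1]
      refine ⟨φ.map (fun cl => embed (clauseE cl)), by simp [hlenφ], ?_,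
        (chainA_map_encF φ).symm⟩
      intro w hw
      obtain ⟨cl, hclφ, rfl⟩ := List.mem_map.mp hw
      exact (clause_mem α n _).mpr ⟨cl, ⟨(hbound cl hclφ).1, (hbound cl hclφ).2.1,
        (hbound cl hclφ).2.2⟩, hsat cl hclφ, rfl⟩
    · rw [oisub_iff_subS]
      exact subS_nil_self (encF φ)


end MttF
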